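/- If G₁ and G₂ are connected nontrivial graphs and G₁ contains an odd cycle (i.e., G₁ is not bipartite), then the Kronecker product G₁ × G₂ is connected. -/

import Mathlib

open SimpleGraph

/-- The Kronecker (tensor) product of two simple graphs. -/
def tensorProd {α β : Type*} (G : SimpleGraph α) (H : SimpleGraph β) : SimpleGraph (α × β) where
  Adj p q := G.Adj p.1 q.1 ∧ H.Adj p.2 q.2
  symm := ⟨fun p q h => ⟨h.1.symm, h.2.symm⟩⟩
  loopless := ⟨fun p h => G.loopless.irrefl p.1 h.1⟩

instance {α β : Type*} (G : SimpleGraph α) (H : SimpleGraph β)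
    [DecidableRel G.Adj] [DecidableRel H.Adj] : DecidableRel (tensorProd G H).Adj :=
  fun _ _ => instDecidableAnd

/-- `S` is a separating set of `G`: deleting `S` leaves a single vertex or a
disconnected (possibly empty) graph. -/
def IsSeparating {V : Type*} (G : SimpleGraph V) (S : Set V) : Prop :=
  Sᶜ.ncard = 1 ∨ ¬ (G.induce Sᶜ).Connected

/-- The vertex connectivity `κ(G)`: the minimum cardinality of a separating set. -/
noncomputable def kappa {V : Type*} [Fintype V] (G : SimpleGraph V) : ℕ :=
  sInf {k | ∃ S : Set V, IsSeparating G S ∧ S.ncard = k}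

/-- A graph is super-connected (super-κ) if every minimum separating set is the
neighborhood of some vertex. -/
def SuperK {V : Type*} [Fintype V] (G : SimpleGraph V) : Prop :=
  ∀ S : Set V, IsSeparating G S → S.ncard = kappa G → ∃ v, S = G.neighborSet v

section aux
variable {α β : Type*} {G : SimpleGraph α} {H : SimpleGraph β}

/-- Every vertex of a connected graph with an edge has a neighbor. -/
lemma exists_nbr (h : G.Connected) (he : G.edgeSet.Nonempty) (v : α) :
    ∃ w, G.Adj v w := by
  obtain ⟨e, he⟩ := he
  induction e using Sym2.ind with
  | _ x y =>
    rw [mem_edgeSet] at he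
    obtain ⟨p⟩ := h v x
    cases p with
    | nil => exact ⟨y, he⟩
    | cons h' _ => exact ⟨_, h'⟩

lemma walk_add_two (hnbr : ∀ v, ∃ w, G.Adj v w) {u v : α} (p : G.Walk u v) :
    ∃ q : G.Walk u v, q.length = p.length + 2 := by
  obtain ⟨w, hw⟩ := hnbr v
  exact ⟨p.append (Walk.cons hw (Walk.cons hw.symm Walk.nil)), by simp [Walk.length_append]⟩

lemma walk_extend (hnbr : ∀ v, ∃ w, G.Adj v w) {u v : α} (p : G.Walk u v) (k : ℕ) :
    ∃ q : G.Walk u v, q.length = p.length + 2 * k := by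
  induction k with
  | zero => exact ⟨p, rfl⟩
  | succ k ih =>
    obtain ⟨q, hq⟩ := ih
    obtain ⟨r, hr⟩ := walk_add_two hnbr q
    exact ⟨r, by omega⟩

/-- If not 2-colorable, there is an odd closed walk. -/
lemma exists_odd_closed_walk (h : G.Connected) (hodd : ¬ G.Colorable 2) :
    ∃ (x : α) (w : G.Walk x x), Odd w.length := by
  by_contra hc
  push_neg at hc
  apply hodd
  have hne := h.nonempty
  obtain ⟨v₀⟩ := hne
  refine ⟨Coloring.mk (fun v => (⟨G.dist v₀ v % 2, Nat.mod_lt _ two_pos⟩ : Fin 2)) ?_⟩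
  intro u v huv hEq
  obtain ⟨p, hp⟩ := (h v₀ u).exists_walk_length_eq_dist
  obtain ⟨q, hq⟩ := (h v₀ v).exists_walk_length_eq_dist
  have := hc v₀ (p.append (Walk.cons huv q.reverse))
  simp only [Walk.length_append, Walk.length_reverse, Walk.length_cons] at this
  rw [Nat.odd_iff] at this
  have hEq' : G.dist v₀ u % 2 = G.dist v₀ v % 2 := congrArg Fin.val hEq
  omega

lemma zip_walk : ∀ {a c : α} {b d : β} (p : G.Walk a c) (q : H.Walk b d),
    p.length = q.length → (tensorProd G H).Reachable (a, b) (c, d) := by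
  intro a c b d p
  induction p generalizing b with
  | nil =>
    intro q hq
    cases q with
    | nil => exact Reachable.refl _
    | cons _ _ => simp at hq
  | @cons a a' c hadj p ih =>
    intro q hq
    cases q with
    | nil => simp at hq
    | @cons b b' d hadj' q =>
      simp only [Walk.length_cons, Nat.add_right_cancel_iff] at hq
      exact (Reachable.refl _).trans
        ((Adj.reachable (⟨hadj, hadj'⟩ : (tensorProd G H).Adj (a, b) (a', b'))).trans
          (ih q hq))

end aux

theorem stmt4 {α β : Type*} [Fintype α] [Fintype β]
    (G₁ : SimpleGraph α) (G₂ : SimpleGraph β)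
    (h₁ : G₁.Connected) (h₂ : G₂.Connected)
    (he₁ : G₁.edgeSet.Nonempty) (he₂ : G₂.edgeSet.Nonempty)
    (hodd : ¬ G₁.Colorable 2) :
    (tensorProd G₁ G₂).Connected := by
  have hnbr₁ := exists_nbr h₁ he₁
  have hnbr₂ := exists_nbr h₂ he₂
  obtain ⟨x, w, hw⟩ := exists_odd_closed_walk h₁ hodd
  haveI : Nonempty (α × β) := ⟨(h₁.nonempty.some, h₂.nonempty.some)⟩
  refine Connected.mk ?_
  rintro ⟨a, b⟩ ⟨c, d⟩
  obtain ⟨q⟩ := h₂ b d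
  obtain ⟨p0⟩ := h₁ a c
  obtain ⟨r⟩ := h₁ a x
  have hex : ∃ p : G₁.Walk a c, p.length % 2 = q.length % 2 := by
    by_cases hpar : p0.length % 2 = q.length % 2
    · exact ⟨p0, hpar⟩
    · refine ⟨r.append (w.append (r.reverse.append p0)), ?_⟩
      simp only [Walk.length_append, Walk.length_reverse]
      rw [Nat.odd_iff] at hw
      omega
  obtain ⟨p, hp⟩ := hex
  set N := max p.length q.length with hN
  have hle1 : p.length ≤ N := le_max_left _ _
  have hle2 : q.length ≤ N := le_max_right _ _
  have hch : N = p.length ∨ N = q.length := max_choice _ _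
  obtain ⟨p', hp'⟩ := walk_extend hnbr₁ p ((N - p.length) / 2)
  obtain ⟨q', hq'⟩ := walk_extend hnbr₂ q ((N - q.length) / 2)
  exact zip_walk p' q' (by omega)
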